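/- Let q > 2 be an integer, 0 < δ < 1/q a real, and n ≥ 2. Let N ⊆ {1,…,n}, and for each i ∈ N let Mᵢ be a family of at least δn pairwise disjoint q-element subsets of {1,…,n}∖{i}. Then for every real a with 1 ≤ a ≤ (log₂ n)^{1/(q−1)} there exists a subset B ⊆ {1,…,n} such that: (1) |B| ≤ (a + 4/(δ·a^{q−2}))·n^{(q−2)/(q−1)}, and (2) for every i ∈ N∖B, the number of sets α ∈ Mᵢ with |α∖B| ≤ 2 is at least (δ/2)·a^{q−2}·n^{1/(q−1)}. -/

import Mathlib

open Finset

lemma rand_binom {γ : Type*} [DecidableEq γ] (U : Finset γ) (p : ℝ) :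
    ∑ t ∈ U.powerset, p ^ t.card * (1 - p) ^ (U.card - t.card) = 1 := by
  have h2 : ∀ t ∈ U.powerset, p ^ t.card * (1 - p) ^ (U.card - t.card)
      = (∏ _i ∈ t, p) * ∏ _i ∈ U \ t, (1 - p) := by
    intro t ht
    rw [prod_const, prod_const, card_sdiff_of_subset (mem_powerset.mp ht)]
  rw [Finset.sum_congr rfl h2, ← Finset.prod_add]
  simp

lemma rand_key {n : ℕ} (p : ℝ) (S : Finset (Fin n)) :
    ∑ B : Finset (Fin n), p ^ B.card * (1 - p) ^ (n - B.card) * (if S ⊆ B then (1:ℝ) else 0)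
      = p ^ S.card := by
  classical
  simp only [mul_ite, mul_one, mul_zero]
  rw [← Finset.sum_filter]
  have hU : (Finset.univ \ S : Finset (Fin n)).card = n - S.card := by
    rw [card_sdiff_of_subset (subset_univ S), card_univ, Fintype.card_fin]
  have hmain : ∑ B ∈ Finset.univ.filter (fun B : Finset (Fin n) => S ⊆ B),
      p ^ B.card * (1 - p) ^ (n - B.card)
      = ∑ t ∈ (Finset.univ \ S : Finset (Fin n)).powerset,
        p ^ S.card * (p ^ t.card * (1 - p) ^ ((Finset.univ \ S : Finset (Fin n)).card - t.card)) := by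
    refine Finset.sum_bij' (fun B _ => B \ S) (fun t _ => S ∪ t) ?_ ?_ ?_ ?_ ?_
    · intro B hB
      simp only [mem_powerset]
      exact sdiff_subset_sdiff (subset_univ B) subset_rfl
    · intro t ht
      simp
    · intro B hB
      simp only [mem_filter] at hB
      exact Finset.union_sdiff_of_subset hB.2
    · intro t ht
      have hd : Disjoint S t := by
        rw [mem_powerset] at ht
        exact Finset.disjoint_sdiff.mono_right ht
      exact Finset.union_sdiff_cancel_left hd
    · intro B hB
      simp only [mem_filter] at hB
      have h1 : (B \ S).card + S.card = B.card := Finset.card_sdiff_add_card_eq_card hB.2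
      have h2 : B.card ≤ n := by
        simpa using Finset.card_le_card (subset_univ B)
      show p ^ B.card * (1 - p) ^ (n - B.card)
        = p ^ S.card * (p ^ (B \ S).card * (1 - p) ^ ((Finset.univ \ S : Finset (Fin n)).card - (B \ S).card))
      rw [hU, ← mul_assoc, ← pow_add]
      congr 1
      · congr 1; omega
      · congr 1; omega
  rw [hmain, ← Finset.mul_sum, rand_binom, mul_one]

lemma rand_total {n : ℕ} (p : ℝ) :
    ∑ B : Finset (Fin n), p ^ B.card * (1 - p) ^ (n - B.card) = 1 := by
  have h := rand_key p (∅ : Finset (Fin n))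
  simpa using h

lemma rand_Ecard {n : ℕ} (p : ℝ) :
    ∑ B : Finset (Fin n), p ^ B.card * (1 - p) ^ (n - B.card) * (B.card : ℝ) = n * p := by
  classical
  have h : ∀ B : Finset (Fin n),
      ((B.card : ℝ)) = ∑ x : Fin n, (if ({x} : Finset (Fin n)) ⊆ B then (1:ℝ) else 0) := by
    intro B
    simp [Finset.singleton_subset_iff, Finset.sum_boole, Finset.filter_mem_eq_inter]
  calc ∑ B : Finset (Fin n), p ^ B.card * (1 - p) ^ (n - B.card) * (B.card : ℝ)
      = ∑ B : Finset (Fin n), ∑ x : Fin n,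
          p ^ B.card * (1 - p) ^ (n - B.card) * (if ({x} : Finset (Fin n)) ⊆ B then (1:ℝ) else 0) := by
        refine Finset.sum_congr rfl fun B _ => ?_
        rw [h B, Finset.mul_sum]
    _ = ∑ x : Fin n, ∑ B : Finset (Fin n),
          p ^ B.card * (1 - p) ^ (n - B.card) * (if ({x} : Finset (Fin n)) ⊆ B then (1:ℝ) else 0) :=
        Finset.sum_comm
    _ = ∑ _x : Fin n, p ^ (1:ℕ) := by
        refine Finset.sum_congr rfl fun x _ => ?_
        rw [rand_key p ({x} : Finset (Fin n)), Finset.card_singleton]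
    _ = n * p := by simp [mul_comm]

section
variable {n s : ℕ} (p : ℝ) (A : Finset (Finset (Fin n))) (T : Finset (Fin n) → Finset (Fin n))

lemma rand_EY (hcard : ∀ α ∈ A, (T α).card = s) :
    ∑ B : Finset (Fin n), p ^ B.card * (1 - p) ^ (n - B.card) *
        (∑ α ∈ A, if T α ⊆ B then (1:ℝ) else 0)
      = A.card * p ^ s := by
  classical
  simp only [Finset.mul_sum]
  rw [Finset.sum_comm]
  rw [Finset.sum_congr rfl fun α hα => by rw [rand_key p (T α), hcard α hα]]
  rw [Finset.sum_const, nsmul_eq_mul]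

lemma rand_EY2 (hcard : ∀ α ∈ A, (T α).card = s)
    (hunion : ∀ α ∈ A, ∀ β ∈ A, α ≠ β → (T α ∪ T β).card = s + s) :
    ∑ B : Finset (Fin n), p ^ B.card * (1 - p) ^ (n - B.card) *
        (∑ α ∈ A, if T α ⊆ B then (1:ℝ) else 0) ^ 2
      = A.card * p ^ s + A.card * ((A.card : ℝ) - 1) * (p ^ s * p ^ s) := by
  classical
  have hsq : ∀ B : Finset (Fin n),
      (∑ α ∈ A, if T α ⊆ B then (1:ℝ) else 0) ^ 2
        = ∑ α ∈ A, ∑ β ∈ A, (if T α ∪ T β ⊆ B then (1:ℝ) else 0) := by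
    intro B
    rw [sq, Finset.sum_mul_sum]
    refine Finset.sum_congr rfl fun α _ => Finset.sum_congr rfl fun β _ => ?_
    rw [ite_zero_mul_ite_zero, one_mul]
    congr 1
    simp [Finset.union_subset_iff]
  calc ∑ B : Finset (Fin n), p ^ B.card * (1 - p) ^ (n - B.card) *
        (∑ α ∈ A, if T α ⊆ B then (1:ℝ) else 0) ^ 2
      = ∑ α ∈ A, ∑ β ∈ A, ∑ B : Finset (Fin n),
          p ^ B.card * (1 - p) ^ (n - B.card) * (if T α ∪ T β ⊆ B then (1:ℝ) else 0) := by
        rw [Finset.sum_congr rfl fun B _ => by rw [hsq B, Finset.mul_sum]]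
        rw [Finset.sum_comm]
        refine Finset.sum_congr rfl fun α _ => ?_
        rw [Finset.sum_congr rfl fun B (_ : B ∈ Finset.univ) => Finset.mul_sum _ _ _]
        exact Finset.sum_comm
    _ = ∑ α ∈ A, ∑ β ∈ A, p ^ (T α ∪ T β).card :=
        Finset.sum_congr rfl fun α _ => Finset.sum_congr rfl fun β _ => rand_key p _
    _ = ∑ α ∈ A, (p ^ s + ((A.card : ℝ) - 1) * (p ^ s * p ^ s)) := by
        refine Finset.sum_congr rfl fun α hα => ?_
        rw [← Finset.add_sum_erase _ _ hα]
        congr 1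
        · rw [Finset.union_self, hcard α hα]
        · rw [Finset.sum_congr rfl fun β hβ => by
            rw [hunion α hα β (Finset.mem_of_mem_erase hβ) (Finset.ne_of_mem_erase hβ).symm,
              pow_add]]
          rw [Finset.sum_const, Finset.card_erase_of_mem hα, nsmul_eq_mul]
          congr 1
          exact Nat.cast_pred (Finset.card_pos.mpr ⟨α, hα⟩)
    _ = A.card * p ^ s + A.card * ((A.card : ℝ) - 1) * (p ^ s * p ^ s) := by
        rw [Finset.sum_const, nsmul_eq_mul]; ring

lemma rand_var (hcard : ∀ α ∈ A, (T α).card = s)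
    (hunion : ∀ α ∈ A, ∀ β ∈ A, α ≠ β → (T α ∪ T β).card = s + s) :
    ∑ B : Finset (Fin n), p ^ B.card * (1 - p) ^ (n - B.card) *
        ((∑ α ∈ A, if T α ⊆ B then (1:ℝ) else 0) - A.card * p ^ s) ^ 2
      = A.card * p ^ s - A.card * (p ^ s * p ^ s) := by
  classical
  have h1 := rand_EY p A T hcard
  have h2 := rand_EY2 p A T hcard hunion
  have h0 := rand_total (n := n) p
  set c : ℝ := A.card * p ^ s with hc
  have hexp : ∀ B : Finset (Fin n),
      p ^ B.card * (1 - p) ^ (n - B.card) *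
        ((∑ α ∈ A, if T α ⊆ B then (1:ℝ) else 0) - c) ^ 2
      = p ^ B.card * (1 - p) ^ (n - B.card) *
          (∑ α ∈ A, if T α ⊆ B then (1:ℝ) else 0) ^ 2
        - (2 * c) * (p ^ B.card * (1 - p) ^ (n - B.card) *
            (∑ α ∈ A, if T α ⊆ B then (1:ℝ) else 0))
        + (c ^ 2) * (p ^ B.card * (1 - p) ^ (n - B.card)) := fun B => by ring
  rw [Finset.sum_congr rfl fun B _ => hexp B]
  rw [Finset.sum_add_distrib, Finset.sum_sub_distrib, ← Finset.mul_sum, ← Finset.mul_sum,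
    h1, h2, h0]
  rw [hc]; ring
end

set_option maxHeartbeats 2000000 in
/-- The random-set lemma: given, for each `i ∈ N`, a family `Mᵢ` of at least `δn`
pairwise disjoint `q`-element subsets of `{1,…,n}∖{i}`, for every `1 ≤ a ≤ (log₂ n)^{1/(q-1)}`
there is a set `B` of size at most `(a + 4/(δ a^{q-2}))·n^{(q-2)/(q-1)}` such that for every
`i ∈ N∖B` at least `(δ/2)·a^{q-2}·n^{1/(q-1)}` of the sets `α ∈ Mᵢ` satisfy `|α∖B| ≤ 2`. -/
theorem random_subset_lemma
    (n q : ℕ) (hn : 2 ≤ n) (hq : 2 < q)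
    (δ : ℝ) (hδ0 : 0 < δ) (hδ1 : δ < 1 / (q : ℝ))
    (N : Finset (Fin n)) (M : Fin n → Finset (Finset (Fin n)))
    (hMcard : ∀ i ∈ N, δ * n ≤ ((M i).card : ℝ))
    (hMdisj : ∀ i ∈ N, ((M i : Set (Finset (Fin n))).PairwiseDisjoint id))
    (hMq : ∀ i ∈ N, ∀ α ∈ M i, α.card = q ∧ i ∉ α) :
    ∀ a : ℝ, 1 ≤ a → a ≤ (Real.logb 2 (n : ℝ)) ^ ((1 : ℝ) / ((q : ℝ) - 1)) →
      ∃ B : Finset (Fin n),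
        ((B.card : ℝ) ≤ (a + 4 / (δ * a ^ ((q : ℝ) - 2))) *
          (n : ℝ) ^ (((q : ℝ) - 2) / ((q : ℝ) - 1))) ∧
        ∀ i ∈ N, i ∉ B →
          δ / 2 * a ^ ((q : ℝ) - 2) * (n : ℝ) ^ ((1 : ℝ) / ((q : ℝ) - 1)) ≤
            ((((M i).filter (fun α => (α \ B).card ≤ 2)).card : ℕ) : ℝ) := by
  classical
  intro a ha1 ha2
  have hqR : (2:ℝ) < (q:ℝ) := by exact_mod_cast hq
  set r : ℝ := (q:ℝ) - 1 with hr
  have hr1 : 1 < r := by rw [hr]; linarith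
  have hr0 : 0 < r := by linarith
  have hn0 : (0:ℝ) < (n:ℝ) := by
    have : (0:ℕ) < n := by omega
    exact_mod_cast this
  have ha0 : (0:ℝ) < a := lt_of_lt_of_le one_pos ha1
  set s : ℕ := q - 2 with hs
  have hsR : (s:ℝ) = (q:ℝ) - 2 := by
    rw [hs]; push_cast [Nat.cast_sub (by omega : 2 ≤ q)]; ring
  set p : ℝ := a * (n:ℝ) ^ (-(1/r)) with hp
  have hnp : (0:ℝ) < (n:ℝ) ^ (-(1/r)) := Real.rpow_pos_of_pos hn0 _
  have hp0 : 0 < p := mul_pos ha0 hnp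
  -- p < 1
  have hlogb : Real.logb 2 (n:ℝ) < (n:ℝ) := by
    rw [Real.logb_lt_iff_lt_rpow (by norm_num) hn0]
    calc (n:ℝ) < ((2:ℕ) ^ n : ℕ) := by exact_mod_cast Nat.lt_two_pow_self
      _ = (2:ℝ) ^ ((n:ℕ):ℝ) := by rw [Real.rpow_natCast]; push_cast; ring
  have hlogb0 : 0 ≤ Real.logb 2 (n:ℝ) :=
    Real.logb_nonneg (by norm_num) (by exact_mod_cast Nat.one_le_iff_ne_zero.mpr (by omega))
  have haln : a < (n:ℝ) ^ ((1:ℝ)/r) :=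
    lt_of_le_of_lt ha2 (Real.rpow_lt_rpow hlogb0 hlogb (by positivity))
  have hp1 : p < 1 := by
    have h1 : p < (n:ℝ) ^ ((1:ℝ)/r) * (n:ℝ) ^ (-(1/r)) := by
      rw [hp]; exact mul_lt_mul_of_pos_right haln hnp
    rwa [← Real.rpow_add hn0, add_neg_cancel, Real.rpow_zero] at h1
  have hw : ∀ B : Finset (Fin n), 0 < p ^ B.card * (1 - p) ^ (n - B.card) :=
    fun B => mul_pos (pow_pos hp0 _) (pow_pos (by linarith) _)
  have hps0 : (0:ℝ) < p ^ s := pow_pos hp0 s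
  -- key exponent identities
  have hps_eq : p ^ s = a ^ ((q:ℝ)-2) * (n:ℝ) ^ (-(((q:ℝ)-2)/r)) := by
    rw [hp, mul_pow]
    congr 1
    · rw [← Real.rpow_natCast a s, hsR]
    · rw [← Real.rpow_natCast ((n:ℝ) ^ (-(1/r))) s, ← Real.rpow_mul hn0.le]
      congr 1
      rw [hsR]; ring
  have hkey : (n:ℝ) * p ^ s = a ^ ((q:ℝ)-2) * (n:ℝ) ^ ((1:ℝ)/r) := by
    rw [hps_eq]
    have h2 : (n:ℝ) * ((n:ℝ) ^ (-(((q:ℝ)-2)/r))) = (n:ℝ) ^ ((1:ℝ)/r) := by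
      nth_rewrite 1 [← Real.rpow_one (n:ℝ)]
      rw [← Real.rpow_add hn0]
      congr 1
      rw [hr]; have hq1 : (q:ℝ) - 1 ≠ 0 := (by linarith); field_simp; ring
    calc (n:ℝ) * (a ^ ((q:ℝ)-2) * (n:ℝ) ^ (-(((q:ℝ)-2)/r)))
        = a ^ ((q:ℝ)-2) * ((n:ℝ) * (n:ℝ) ^ (-(((q:ℝ)-2)/r))) := by ring
      _ = a ^ ((q:ℝ)-2) * (n:ℝ) ^ ((1:ℝ)/r) := by rw [h2]
  have hEB : (n:ℝ) * p = a * (n:ℝ) ^ (((q:ℝ)-2)/r) := by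
    rw [hp]
    have h2 : (n:ℝ) * ((n:ℝ) ^ (-(1/r))) = (n:ℝ) ^ (((q:ℝ)-2)/r) := by
      nth_rewrite 1 [← Real.rpow_one (n:ℝ)]
      rw [← Real.rpow_add hn0]
      congr 1
      rw [hr]; have hq1 : (q:ℝ) - 1 ≠ 0 := (by linarith); field_simp; ring
    calc (n:ℝ) * (a * (n:ℝ) ^ (-(1/r))) = a * ((n:ℝ) * (n:ℝ) ^ (-(1/r))) := by ring
      _ = a * (n:ℝ) ^ (((q:ℝ)-2)/r) := by rw [h2]
  set τ : ℝ := δ / 2 * a ^ ((q:ℝ) - 2) * (n:ℝ) ^ ((1:ℝ) / r) with hτ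
  set μ : ℝ := δ * ((n:ℝ) * p ^ s) with hμ
  have hμτ : μ = 2 * τ := by rw [hμ, hτ, hkey]; ring
  have hμ0 : 0 < μ := by rw [hμ]; positivity
  -- the seed sets
  set T : Finset (Fin n) → Finset (Fin n) :=
    fun α => if h : s ≤ α.card then (Finset.exists_subset_card_eq h : ∃ t ⊆ α, t.card = s).choose else ∅ with hT
  have hTsub : ∀ i ∈ N, ∀ α ∈ M i, T α ⊆ α ∧ (T α).card = s := by
    intro i hi α hα
    have hcard := (hMq i hi α hα).1
    have hle : s ≤ α.card := by rw [hcard, hs]; omega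
    have hspec := (Finset.exists_subset_card_eq hle : ∃ t ⊆ α, t.card = s).choose_spec
    rw [hT]
    simp only [dif_pos hle]
    exact hspec
  -- notation for counts and indicators
  set cnt : Fin n → Finset (Fin n) → ℝ :=
    fun i B => (((M i).filter (fun α => (α \ B).card ≤ 2)).card : ℝ) with hcnt
  set Z : Fin n → Finset (Fin n) → ℝ :=
    fun i B => if τ ≤ cnt i B then 0 else 1 with hZ
  set Y : Fin n → Finset (Fin n) → ℝ :=
    fun i B => ∑ α ∈ M i, if T α ⊆ B then (1:ℝ) else 0 with hY
  have hYle : ∀ i ∈ N, ∀ B : Finset (Fin n), Y i B ≤ cnt i B := by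
    intro i hi B
    rw [hY, hcnt]
    simp only
    rw [← Finset.sum_boole]
    refine Finset.sum_le_sum fun α hα => ?_
    by_cases h1 : T α ⊆ B
    · have h2 : (α \ B).card ≤ 2 := by
        have h3 : α \ B ⊆ α \ T α := sdiff_subset_sdiff subset_rfl h1
        have h4 : (α \ T α).card = 2 := by
          rw [Finset.card_sdiff_of_subset (hTsub i hi α hα).1, (hTsub i hi α hα).2,
            (hMq i hi α hα).1, hs]
          omega
        calc (α \ B).card ≤ (α \ T α).card := Finset.card_le_card h3
          _ = 2 := h4
      simp [h1, h2]
    · simp only [if_neg h1]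
      positivity
  -- per-i variance hypotheses
  have hTcard : ∀ i ∈ N, ∀ α ∈ M i, (T α).card = s :=
    fun i hi α hα => (hTsub i hi α hα).2
  have hTunion : ∀ i ∈ N, ∀ α ∈ M i, ∀ β ∈ M i, α ≠ β → (T α ∪ T β).card = s + s := by
    intro i hi α hα β hβ hne
    have hd : Disjoint α β := hMdisj i hi (Finset.mem_coe.mpr hα) (Finset.mem_coe.mpr hβ) hne
    have hd2 : Disjoint (T α) (T β) := hd.mono (hTsub i hi α hα).1 (hTsub i hi β hβ).1
    rw [Finset.card_union_of_disjoint hd2, hTcard i hi α hα, hTcard i hi β hβ]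
  -- expectation of Z i
  have hEZ : ∀ i ∈ N,
      ∑ B : Finset (Fin n), p ^ B.card * (1 - p) ^ (n - B.card) * Z i B ≤ 4 / μ := by
    intro i hi
    set m : ℝ := ((M i).card : ℝ) with hm
    have hmge : δ * (n:ℝ) ≤ m := hMcard i hi
    have hμi : μ ≤ m * p ^ s := by
      rw [hμ]
      calc δ * ((n:ℝ) * p ^ s) = (δ * (n:ℝ)) * p ^ s := by ring
        _ ≤ m * p ^ s := mul_le_mul_of_nonneg_right hmge hps0.le
    have hμi0 : (0:ℝ) < m * p ^ s := lt_of_lt_of_le hμ0 hμi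
    have hptw : ∀ B : Finset (Fin n),
        Z i B ≤ 4 / (m * p ^ s) ^ 2 * (Y i B - m * p ^ s) ^ 2 := by
      intro B
      by_cases hB : τ ≤ cnt i B
      · rw [hZ]; simp only [if_pos hB]; positivity
      · rw [hZ]; simp only [if_neg hB]
        have h1 : Y i B ≤ cnt i B := hYle i hi B
        have h2 : cnt i B < τ := lt_of_not_ge hB
        have h3 : Y i B < m * p ^ s / 2 := by
          have : τ ≤ m * p ^ s / 2 := by rw [hμτ] at hμi; linarith
          linarith
        have h4 : (m * p ^ s / 2) ^ 2 ≤ (Y i B - m * p ^ s) ^ 2 := by nlinarith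
        calc (1:ℝ) = 4 / (m * p ^ s) ^ 2 * (m * p ^ s / 2) ^ 2 := by
              rw [div_mul_eq_mul_div, eq_div_iff (by positivity)]; ring
          _ ≤ 4 / (m * p ^ s) ^ 2 * (Y i B - m * p ^ s) ^ 2 :=
              mul_le_mul_of_nonneg_left h4 (by positivity)
    calc ∑ B : Finset (Fin n), p ^ B.card * (1 - p) ^ (n - B.card) * Z i B
        ≤ ∑ B : Finset (Fin n), p ^ B.card * (1 - p) ^ (n - B.card) *
            (4 / (m * p ^ s) ^ 2 * (Y i B - m * p ^ s) ^ 2) :=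
          Finset.sum_le_sum fun B _ => mul_le_mul_of_nonneg_left (hptw B) (hw B).le
      _ = 4 / (m * p ^ s) ^ 2 * ∑ B : Finset (Fin n),
            p ^ B.card * (1 - p) ^ (n - B.card) * (Y i B - m * p ^ s) ^ 2 := by
          rw [Finset.mul_sum]
          exact Finset.sum_congr rfl fun B _ => by ring
      _ = 4 / (m * p ^ s) ^ 2 * (m * p ^ s - m * (p ^ s * p ^ s)) := by
          rw [hY, hm]
          rw [rand_var p (M i) T (hTcard i hi) (hTunion i hi)]
      _ ≤ 4 / (m * p ^ s) ^ 2 * (m * p ^ s) := by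
          refine mul_le_mul_of_nonneg_left ?_ (by positivity)
          have hm0 : (0:ℝ) ≤ m := by rw [hm]; positivity
          nlinarith [hps0]
      _ = 4 / (m * p ^ s) := by field_simp
      _ ≤ 4 / μ := div_le_div_of_nonneg_left (by norm_num) hμ0 hμi
  -- expectation of the whole functional
  set C : ℝ := (n:ℝ) * p + (n:ℝ) * (4 / μ) with hC
  have hEF : ∑ B : Finset (Fin n), p ^ B.card * (1 - p) ^ (n - B.card) *
      ((B.card : ℝ) + ∑ i ∈ N, Z i B) ≤ C := by
    have hsplit : ∑ B : Finset (Fin n), p ^ B.card * (1 - p) ^ (n - B.card) *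
        ((B.card : ℝ) + ∑ i ∈ N, Z i B)
        = (∑ B : Finset (Fin n), p ^ B.card * (1 - p) ^ (n - B.card) * (B.card : ℝ))
          + ∑ i ∈ N, ∑ B : Finset (Fin n), p ^ B.card * (1 - p) ^ (n - B.card) * Z i B := by
      simp only [mul_add]
      rw [Finset.sum_add_distrib]
      congr 1
      rw [Finset.sum_congr rfl fun B (_ : B ∈ Finset.univ) => Finset.mul_sum _ _ _]
      exact Finset.sum_comm
    rw [hsplit, rand_Ecard]
    have h2 : ∑ i ∈ N, ∑ B : Finset (Fin n), p ^ B.card * (1 - p) ^ (n - B.card) * Z i B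
        ≤ ∑ _i ∈ N, 4 / μ := Finset.sum_le_sum fun i hi => hEZ i hi
    have h3 : (∑ _i ∈ N, 4 / μ : ℝ) ≤ (n:ℝ) * (4 / μ) := by
      rw [Finset.sum_const, nsmul_eq_mul]
      refine mul_le_mul_of_nonneg_right ?_ (by positivity)
      have : N.card ≤ n := by
        calc N.card ≤ Fintype.card (Fin n) := Finset.card_le_univ N
          _ = n := Fintype.card_fin n
      exact_mod_cast this
    rw [hC]
    linarith
  -- choose a good B₀
  have hex : ∃ B : Finset (Fin n), (B.card : ℝ) + ∑ i ∈ N, Z i B ≤ C := by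
    by_contra hcon
    push_neg at hcon
    have h1 : ∑ B : Finset (Fin n), p ^ B.card * (1 - p) ^ (n - B.card) * C
        < ∑ B : Finset (Fin n), p ^ B.card * (1 - p) ^ (n - B.card) *
            ((B.card : ℝ) + ∑ i ∈ N, Z i B) :=
      Finset.sum_lt_sum_of_nonempty Finset.univ_nonempty
        (fun B _ => mul_lt_mul_of_pos_left (hcon B) (hw B))
    rw [← Finset.sum_mul, rand_total, one_mul] at h1
    linarith
  obtain ⟨B₀, hB₀⟩ := hex
  set Bad : Finset (Fin n) := N.filter (fun i => ¬ τ ≤ cnt i B₀) with hBad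
  refine ⟨B₀ ∪ Bad, ?_, ?_⟩
  · -- size bound
    have hbadcard : (Bad.card : ℝ) = ∑ i ∈ N, Z i B₀ := by
      rw [hBad, hZ]
      rw [Finset.sum_congr rfl fun i (_ : i ∈ N) => show
        (if τ ≤ cnt i B₀ then (0:ℝ) else 1) = if ¬ τ ≤ cnt i B₀ then (1:ℝ) else 0 by
          by_cases h : τ ≤ cnt i B₀ <;> simp [h]]
      rw [Finset.sum_boole]
    have hCeq : C = (a + 4 / (δ * a ^ ((q:ℝ) - 2))) * (n:ℝ) ^ (((q:ℝ) - 2) / r) := by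
      rw [hC, hEB]
      have h1 : (n:ℝ) * (4 / μ) = 4 / (δ * a ^ ((q:ℝ) - 2)) * (n:ℝ) ^ (((q:ℝ) - 2) / r) := by
        have ha2' : (0:ℝ) < a ^ ((q:ℝ) - 2) := Real.rpow_pos_of_pos ha0 _
        have hn1 : (0:ℝ) < (n:ℝ) ^ ((1:ℝ)/r) := Real.rpow_pos_of_pos hn0 _
        have e2 : (n:ℝ) / (n:ℝ) ^ ((1:ℝ)/r) = (n:ℝ) ^ (((q:ℝ) - 2)/r) := by
          rw [show ((q:ℝ) - 2)/r = 1 - (1:ℝ)/r from by rw [hr]; have hq1 : (q:ℝ) - 1 ≠ 0 := (by linarith); field_simp; ring,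
            Real.rpow_sub hn0, Real.rpow_one]
        rw [hμ, hkey, ← e2]
        field_simp
      rw [h1]
      ring
    calc (((B₀ ∪ Bad).card : ℕ) : ℝ) ≤ ((B₀.card + Bad.card : ℕ) : ℝ) := by
          exact_mod_cast Finset.card_union_le B₀ Bad
      _ = (B₀.card : ℝ) + (Bad.card : ℝ) := by push_cast; ring
      _ = (B₀.card : ℝ) + ∑ i ∈ N, Z i B₀ := by rw [hbadcard]
      _ ≤ C := hB₀
      _ = (a + 4 / (δ * a ^ ((q:ℝ) - 2))) * (n:ℝ) ^ (((q:ℝ) - 2) / r) := hCeq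
  · -- count bound
    intro i hi hiB
    have hiBad : i ∉ Bad := fun h => hiB (Finset.mem_union_right _ h)
    have h1 : τ ≤ cnt i B₀ := by
      by_contra h
      exact hiBad (Finset.mem_filter.mpr ⟨hi, h⟩)
    have h2 : cnt i B₀ ≤ cnt i (B₀ ∪ Bad) := by
      rw [hcnt]
      simp only
      have hsub : (M i).filter (fun α => (α \ B₀).card ≤ 2) ⊆
          (M i).filter (fun α => (α \ (B₀ ∪ Bad)).card ≤ 2) := by
        refine Finset.monotone_filter_right _ fun α _ h => ?_
        calc (α \ (B₀ ∪ Bad)).card ≤ (α \ B₀).card :=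
              Finset.card_le_card (sdiff_subset_sdiff subset_rfl Finset.subset_union_left)
          _ ≤ 2 := h
      exact_mod_cast Finset.card_le_card hsub
    exact le_trans h1 h2
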